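/- Suppose (a₁,b₁,T₁) and (a₂,b₂,T₂) are 4-chained. Then s_n(b₁,T₁) = s_{4n}(b₂,T₂) for every integer n ≥ 0, and a₁·T₁·b₁^{n−1} = a₂·T₂·b₂^{4n−1} for every integer n ≥ 1; consequently the maximum of |G_{a₁,b₁,T₁}| over [s_{n−1}(b₁,T₁), s_n(b₁,T₁)] equals the maximum of |G_{a₂,b₂,T₂}| over [s_{4(n−1)}(b₂,T₂), s_{4n}(b₂,T₂)]. -/

import Mathlib

open Real Filter Set

/-- Breakpoints `s_n(b,T) = T·π·(b^n − 1)/(b − 1)`. -/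
noncomputable def brk (b T : ℝ) (n : ℕ) : ℝ := T * Real.pi * (b ^ n - 1) / (b - 1)

/-- Index of the segment containing `x ≥ 0`: the unique `m` with `s_m ≤ x < s_{m+1}`
(for `b > 1`, `T > 0`). -/
noncomputable def seg (b T x : ℝ) : ℕ := sInf {n : ℕ | x < brk b T (n + 1)}

/-- The saturated Nussbaum function `N_{a,b,T}`: on `[s_{n−1}, s_n)` (with `m = n − 1`)
it equals `(−1)^m·a·cos((χ − s_m)/(b^m·T))`, extended evenly to `χ < 0`. -/
noncomputable def satN (a b T : ℝ) (χ : ℝ) : ℝ :=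
  (-1 : ℝ) ^ (seg b T |χ|) * a *
    Real.cos ((|χ| - brk b T (seg b T |χ|)) / (b ^ (seg b T |χ|) * T))

/-- The integrated function `G_{a,b,T}(χ) = ∫_0^χ N_{a,b,T}(τ) dτ`. -/
noncomputable def satG (a b T : ℝ) (χ : ℝ) : ℝ := ∫ τ in (0:ℝ)..χ, satN a b T τ

/-- Two triples `(a₁,b₁,T₁)`, `(a₂,b₂,T₂)` are 4-chained. -/
def Chained4 (a₁ b₁ T₁ a₂ b₂ T₂ : ℝ) : Prop :=
  0 < a₂ ∧ 1 < b₂ ∧ 0 < T₂ ∧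
    b₁ = b₂ ^ 4 ∧ a₁ = (b₂ ^ 3 / (1 + b₂ + b₂ ^ 2 + b₂ ^ 3)) * a₂ ∧
    T₁ = (1 + b₂ + b₂ ^ 2 + b₂ ^ 3) * T₂

lemma brk_zero (b T : ℝ) : brk b T 0 = 0 := by simp [brk]

lemma brk_succ {b T : ℝ} (hb : 1 < b) (n : ℕ) :
    brk b T (n + 1) = brk b T n + Real.pi * T * b ^ n := by
  have h : b - 1 ≠ 0 := sub_ne_zero.2 (ne_of_gt hb)
  unfold brk
  rw [div_add' _ _ _ h, div_left_inj' h]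
  ring

lemma brk_strictMono {b T : ℝ} (hb : 1 < b) (hT : 0 < T) : StrictMono (brk b T) := by
  apply strictMono_nat_of_lt_succ
  intro n
  rw [brk_succ hb]
  have : 0 < Real.pi * T * b ^ n := by positivity
  linarith

lemma brk_mono {b T : ℝ} (hb : 1 < b) (hT : 0 < T) : Monotone (brk b T) :=
  (brk_strictMono hb hT).monotone

lemma brk_nonneg {b T : ℝ} (hb : 1 < b) (hT : 0 < T) (n : ℕ) : 0 ≤ brk b T n := by
  have := brk_mono hb hT (Nat.zero_le n)
  rwa [brk_zero] at this

lemma seg_set_nonempty {b T : ℝ} (hb : 1 < b) (hT : 0 < T) (x : ℝ) :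
    {n : ℕ | x < brk b T (n + 1)}.Nonempty := by
  obtain ⟨n, hn⟩ := exists_nat_gt (x / (T * Real.pi))
  refine ⟨n, ?_⟩
  simp only [mem_setOf_eq]
  have hTπ : 0 < T * Real.pi := by positivity
  have h1 : x < T * Real.pi * n := by
    rw [div_lt_iff₀ hTπ] at hn; linarith [hn]
  have h2 : (n : ℝ) * (b - 1) ≤ b ^ (n+1) - 1 := by
    have h := one_add_mul_le_pow (a := b - 1) (by linarith : (-2:ℝ) ≤ b - 1) (n + 1)
    have he : (1 + (b - 1)) = b := by ring
    rw [he] at h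
    have hb1 : 0 ≤ b - 1 := by linarith
    push_cast at h ⊢
    nlinarith
  have hb1 : 0 < b - 1 := by linarith
  have : T * Real.pi * n ≤ brk b T (n + 1) := by
    rw [brk, le_div_iff₀ hb1]
    nlinarith
  linarith

lemma seg_lt {b T : ℝ} (hb : 1 < b) (hT : 0 < T) (x : ℝ) :
    x < brk b T (seg b T x + 1) :=
  Nat.sInf_mem (seg_set_nonempty hb hT x)

lemma seg_le {b T : ℝ} {x : ℝ} {n : ℕ} (h : x < brk b T (n + 1)) : seg b T x ≤ n :=
  Nat.sInf_le h

lemma brk_seg_le {b T : ℝ} (hb : 1 < b) (hT : 0 < T) {x : ℝ} (hx : 0 ≤ x) :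
    brk b T (seg b T x) ≤ x := by
  rcases Nat.eq_zero_or_eq_succ_pred (seg b T x) with h | h
  · rw [h, brk_zero]; exact hx
  · have hk : seg b T x - 1 ∉ {n : ℕ | x < brk b T (n + 1)} := by
      intro hmem
      have h2 : seg b T x ≤ seg b T x - 1 := Nat.sInf_le hmem
      omega
    simp only [mem_setOf_eq, not_lt] at hk
    have : seg b T x - 1 + 1 = seg b T x := by omega
    rwa [this] at hk

lemma seg_eq {b T : ℝ} (hb : 1 < b) (hT : 0 < T) {x : ℝ} {n : ℕ}
    (h1 : brk b T n ≤ x) (h2 : x < brk b T (n + 1)) : seg b T x = n := by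
  refine le_antisymm (seg_le h2) ?_
  by_contra hlt
  push_neg at hlt
  have : brk b T (seg b T x + 1) ≤ brk b T n := brk_mono hb hT (by omega)
  have := seg_lt hb hT x
  linarith

lemma seg_monotone {b T : ℝ} (hb : 1 < b) (hT : 0 < T) : Monotone (seg b T) := by
  intro x y hxy
  exact Nat.sInf_le (lt_of_le_of_lt hxy (seg_lt hb hT y))

lemma seg_measurable {b T : ℝ} (hb : 1 < b) (hT : 0 < T) : Measurable (seg b T) :=
  (seg_monotone hb hT).measurable

lemma satN_measurable {b T : ℝ} (hb : 1 < b) (hT : 0 < T) (a : ℝ) :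
    Measurable (satN a b T) := by
  have hs : Measurable fun χ : ℝ => seg b T |χ| :=
    (seg_measurable hb hT).comp measurable_abs
  have h1 : Measurable fun χ : ℝ => (-1 : ℝ) ^ (seg b T |χ|) :=
    (measurable_from_top (f := fun n : ℕ => (-1 : ℝ) ^ n)).comp hs
  have h2 : Measurable fun χ : ℝ => brk b T (seg b T |χ|) :=
    (measurable_from_top (f := fun n : ℕ => brk b T n)).comp hs
  have h3 : Measurable fun χ : ℝ => (b : ℝ) ^ (seg b T |χ|) :=
    (measurable_from_top (f := fun n : ℕ => (b : ℝ) ^ n)).comp hs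
  exact ((h1.mul measurable_const).mul
    (Real.measurable_cos.comp ((measurable_abs.sub h2).div (h3.mul measurable_const))))

lemma satN_abs_le (a b T χ : ℝ) : |satN a b T χ| ≤ |a| := by
  unfold satN
  rw [abs_mul, abs_mul, abs_pow, abs_neg, abs_one, one_pow, one_mul]
  calc |a| * |Real.cos _| ≤ |a| * 1 :=
        mul_le_mul_of_nonneg_left (Real.abs_cos_le_one _) (abs_nonneg a)
    _ = |a| := mul_one _

lemma satN_intervalIntegrable {b T : ℝ} (hb : 1 < b) (hT : 0 < T) (a u v : ℝ) :
    IntervalIntegrable (satN a b T) MeasureTheory.volume u v := by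
  rw [intervalIntegrable_iff]
  apply MeasureTheory.Integrable.mono' (g := fun _ => |a|)
  · exact MeasureTheory.integrableOn_const measure_Ioc_lt_top.ne
  · exact ((satN_measurable hb hT a).aestronglyMeasurable).restrict
  · exact Filter.Eventually.of_forall fun x => satN_abs_le a b T x

lemma integral_satN_seg {b T : ℝ} (hb : 1 < b) (hT : 0 < T) (a : ℝ) {n : ℕ} {χ : ℝ}
    (h1 : brk b T n ≤ χ) (h2 : χ ≤ brk b T (n + 1)) :
    ∫ τ in (brk b T n)..χ, satN a b T τ =
      (-1 : ℝ) ^ n * a * (b ^ n * T) * Real.sin ((χ - brk b T n) / (b ^ n * T)) := by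
  set s := brk b T n with hs
  set d := b ^ n * T with hd
  have hd0 : 0 < d := by positivity
  have key : ∫ τ in s..χ, satN a b T τ =
      ∫ τ in s..χ, (-1 : ℝ) ^ n * a * Real.cos ((τ - s) / d) := by
    apply intervalIntegral.integral_congr_ae
    have hne : ∀ᵐ τ : ℝ, τ ≠ brk b T (n + 1) := by
      rw [MeasureTheory.ae_iff]
      simp only [ne_eq, not_not]
      have : {τ : ℝ | τ = brk b T (n + 1)} = {brk b T (n + 1)} := rfl
      rw [this]
      exact MeasureTheory.measure_singleton _
    filter_upwards [hne] with τ hτ hmem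
    rw [Set.uIoc_of_le h1] at hmem
    have hτ0 : 0 ≤ τ := le_trans (brk_nonneg hb hT n) (le_of_lt hmem.1)
    have hτlt : τ < brk b T (n + 1) := lt_of_le_of_ne (le_trans hmem.2 h2) hτ
    have hseg : seg b T |τ| = n := by
      rw [abs_of_nonneg hτ0]
      exact seg_eq hb hT hmem.1.le hτlt
    unfold satN
    rw [hseg, abs_of_nonneg hτ0]
  rw [key]
  rw [intervalIntegral.integral_const_mul]
  have ftc : ∫ τ in s..χ, Real.cos ((τ - s) / d) =
      d * Real.sin ((χ - s) / d) - d * Real.sin ((s - s) / d) := by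
    apply intervalIntegral.integral_eq_sub_of_hasDerivAt
    · intro t _ht
      have h : HasDerivAt (fun τ : ℝ => (τ - s) / d) (1 / d) t := by
        simpa using ((hasDerivAt_id t).sub_const s).div_const d
      have := (h.sin).const_mul d
      rwa [mul_comm (Real.cos _), ← mul_assoc, mul_one_div_cancel hd0.ne', one_mul] at this
    · exact (Continuous.intervalIntegrable (by continuity) _ _)
  rw [ftc]
  simp only [sub_self, zero_div, Real.sin_zero, mul_zero, sub_zero]
  ring

lemma satG_brk {b T : ℝ} (hb : 1 < b) (hT : 0 < T) (a : ℝ) (n : ℕ) :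
    satG a b T (brk b T n) = 0 := by
  induction n with
  | zero => simp [satG, brk_zero]
  | succ n ih =>
    have hadd := intervalIntegral.integral_add_adjacent_intervals
      (satN_intervalIntegrable hb hT a 0 (brk b T n))
      (satN_intervalIntegrable hb hT a (brk b T n) (brk b T (n + 1)))
    have hle : brk b T n ≤ brk b T (n + 1) := brk_mono hb hT (Nat.le_succ n)
    have hint := integral_satN_seg hb hT a hle (le_refl (brk b T (n + 1)))
    have harg : (brk b T (n + 1) - brk b T n) / (b ^ n * T) = Real.pi := by
      rw [brk_succ hb]
      field_simp
      ring
    rw [harg, Real.sin_pi, mul_zero] at hint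
    unfold satG at ih ⊢
    rw [← hadd, ih, zero_add, hint]

lemma satG_eq {b T : ℝ} (hb : 1 < b) (hT : 0 < T) (a : ℝ) {n : ℕ} {χ : ℝ}
    (h1 : brk b T n ≤ χ) (h2 : χ ≤ brk b T (n + 1)) :
    satG a b T χ =
      (-1 : ℝ) ^ n * a * (b ^ n * T) * Real.sin ((χ - brk b T n) / (b ^ n * T)) := by
  have hadd := intervalIntegral.integral_add_adjacent_intervals
    (satN_intervalIntegrable hb hT a 0 (brk b T n))
    (satN_intervalIntegrable hb hT a (brk b T n) χ)
  have h0 : satG a b T (brk b T n) = 0 := satG_brk hb hT a n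
  unfold satG at h0 ⊢
  rw [← hadd, h0, zero_add]
  exact integral_satN_seg hb hT a h1 h2

lemma abs_satG_le {a b T : ℝ} (hb : 1 < b) (hT : 0 < T) (ha : 0 < a) {q : ℕ} {χ : ℝ}
    (hχ0 : 0 ≤ χ) (hχ : χ ≤ brk b T (q + 1)) :
    |satG a b T χ| ≤ a * T * b ^ q := by
  rcases eq_or_lt_of_le hχ with heq | hlt
  · rw [heq, satG_brk hb hT a (q + 1), abs_zero]
    positivity
  · set j := seg b T χ with hj
    have hj1 : brk b T j ≤ χ := brk_seg_le hb hT hχ0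
    have hj2 : χ < brk b T (j + 1) := seg_lt hb hT χ
    have hjq : j ≤ q := seg_le hlt
    have heq := satG_eq hb hT a hj1 hj2.le
    rw [heq, abs_mul, abs_mul, abs_mul, abs_pow, abs_neg, abs_one, one_pow, one_mul,
      abs_of_pos ha, abs_of_pos (show (0:ℝ) < b ^ j * T by positivity)]
    have hsin : |Real.sin ((χ - brk b T j) / (b ^ j * T))| ≤ 1 := Real.abs_sin_le_one _
    have hpow : b ^ j ≤ b ^ q := pow_le_pow_right₀ (le_of_lt hb) hjq
    calc a * (b ^ j * T) * |Real.sin _| ≤ a * (b ^ j * T) * 1 := by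
          apply mul_le_mul_of_nonneg_left hsin; positivity
      _ = a * T * b ^ j := by ring
      _ ≤ a * T * b ^ q := by
          apply mul_le_mul_of_nonneg_left hpow; positivity

lemma sSup_satG_seg {a b T : ℝ} (hb : 1 < b) (hT : 0 < T) (ha : 0 < a) {m q : ℕ}
    (hmq : m ≤ q) :
    sSup ((fun χ => |satG a b T χ|) '' Set.Icc (brk b T m) (brk b T (q + 1))) =
      a * T * b ^ q := by
  apply IsGreatest.csSup_eq
  constructor
  · -- membership: attained at χ* = brk q + (π/2)·b^q·T
    have hd0 : (0:ℝ) < b ^ q * T := by positivity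
    have hpi : (0:ℝ) < Real.pi := Real.pi_pos
    have hq1 : brk b T q ≤ brk b T q + Real.pi / 2 * (b ^ q * T) := by nlinarith
    have hq2 : brk b T q + Real.pi / 2 * (b ^ q * T) ≤ brk b T (q + 1) := by
      rw [brk_succ hb]; nlinarith
    refine ⟨brk b T q + Real.pi / 2 * (b ^ q * T),
      ⟨le_trans (brk_mono hb hT hmq) hq1, hq2⟩, ?_⟩
    have heq := satG_eq hb hT a hq1 hq2
    have harg : (brk b T q + Real.pi / 2 * (b ^ q * T) - brk b T q) / (b ^ q * T) =
        Real.pi / 2 := by field_simp; ring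
    show |satG a b T (brk b T q + Real.pi / 2 * (b ^ q * T))| = a * T * b ^ q
    rw [heq, harg, Real.sin_pi_div_two, mul_one, abs_mul, abs_mul, abs_pow, abs_neg,
      abs_one, one_pow, one_mul, abs_of_pos ha, abs_of_pos hd0]
    ring
  · rintro y ⟨χ, hχ, rfl⟩
    have hχ0 : 0 ≤ χ := le_trans (brk_nonneg hb hT m) hχ.1
    exact abs_satG_le hb hT ha hχ0 hχ.2


/-- for 4-chained triples, breakpoints match (`s_n(b₁,T₁) = s_{4n}(b₂,T₂)`),
the peak amplitudes match, and the maxima of `|G₁|`, `|G₂|` over matching segments agree. -/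
theorem chained_segment_match (a₁ b₁ T₁ a₂ b₂ T₂ : ℝ)
    (h : Chained4 a₁ b₁ T₁ a₂ b₂ T₂) :
    (∀ n : ℕ, brk b₁ T₁ n = brk b₂ T₂ (4 * n)) ∧
    (∀ n : ℕ, 1 ≤ n → a₁ * T₁ * b₁ ^ (n - 1) = a₂ * T₂ * b₂ ^ (4 * n - 1)) ∧
    (∀ n : ℕ, 1 ≤ n →
      sSup ((fun χ => |satG a₁ b₁ T₁ χ|) '' Set.Icc (brk b₁ T₁ (n - 1)) (brk b₁ T₁ n)) =
      sSup ((fun χ => |satG a₂ b₂ T₂ χ|) ''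
        Set.Icc (brk b₂ T₂ (4 * (n - 1))) (brk b₂ T₂ (4 * n)))) := by
  obtain ⟨ha₂, hb₂, hT₂, hb₁, ha₁, hT₁⟩ := h
  have hb₂0 : 0 < b₂ := lt_trans one_pos hb₂
  have hS : 0 < 1 + b₂ + b₂ ^ 2 + b₂ ^ 3 := by positivity
  have hb₁' : 1 < b₁ := by rw [hb₁]; exact one_lt_pow₀ hb₂ (by norm_num)
  have hT₁' : 0 < T₁ := by rw [hT₁]; positivity
  have ha₁' : 0 < a₁ := by rw [ha₁]; positivity
  have hb₂1 : b₂ - 1 ≠ 0 := sub_ne_zero.2 (ne_of_gt hb₂)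
  have hb₁1 : b₁ - 1 ≠ 0 := sub_ne_zero.2 (ne_of_gt hb₁')
  -- Part 1
  have p1 : ∀ n : ℕ, brk b₁ T₁ n = brk b₂ T₂ (4 * n) := by
    intro n
    unfold brk
    rw [hb₁, hT₁, pow_mul]
    rw [div_eq_div_iff (by rw [← hb₁]; exact hb₁1) hb₂1]
    ring
  -- Part 2
  have p2 : ∀ n : ℕ, 1 ≤ n → a₁ * T₁ * b₁ ^ (n - 1) = a₂ * T₂ * b₂ ^ (4 * n - 1) := by
    intro n hn
    obtain ⟨k, rfl⟩ := Nat.exists_eq_add_of_le hn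
    have e1 : 1 + k - 1 = k := by omega
    have e2 : 4 * (1 + k) - 1 = 4 * k + 3 := by omega
    rw [e1, e2, hb₁, ha₁, hT₁, ← pow_mul, pow_add]
    field_simp
  refine ⟨p1, p2, ?_⟩
  -- Part 3
  intro n hn
  obtain ⟨k, rfl⟩ := Nat.exists_eq_add_of_le hn
  have e1 : 1 + k - 1 = k := by omega
  have e2 : 1 + k = k + 1 := by omega
  have e3 : 4 * (1 + k) = 4 * k + 3 + 1 := by omega
  rw [e1, e3, e2]
  rw [sSup_satG_seg hb₁' hT₁' ha₁' (le_refl k),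
    sSup_satG_seg hb₂ hT₂ ha₂ (show 4 * k ≤ 4 * k + 3 by omega)]
  have := p2 (1 + k) hn
  rw [e1, e2] at this
  have e4 : 4 * (k + 1) - 1 = 4 * k + 3 := by omega
  rw [e4] at this
  exact this
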